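/- (Lemma 2.14.) Let n ≥ 2, 2 ≤ k ≤ n, and let β_0,…,β_{k-2} be nonnegative real numbers. Define f(λ) = σ_k(λ)/σ_{k-1}(λ) − Σ_{l=0}^{k-2} β_l · σ_l(λ)/σ_{k-1}(λ) on Γ_{k-1}, and write f_i(λ) = ∂f/∂λ_i(λ). Then for every λ ∈ Γ_{k-1}: Σ_{i=1}^{n} f_i(λ) ≥ (n−k+1)/k. -/

import Mathlib

/-- The `k`-th elementary symmetric function of a vector `lam ∈ ℝⁿ`. -/
noncomputable def esymm (n k : ℕ) (lam : Fin n → ℝ) : ℝ :=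
  ∑ s ∈ Finset.powersetCard k (Finset.univ : Finset (Fin n)), ∏ i ∈ s, lam i

/-- The Gårding cone `Γ_k = {λ ∈ ℝⁿ : σ_j(λ) > 0 for all 1 ≤ j ≤ k}`. -/
def GammaCone (n k : ℕ) : Set (Fin n → ℝ) :=
  {lam | ∀ j : ℕ, 1 ≤ j → j ≤ k → 0 < esymm n j lam}

/-- The Krylov-type operator
`f(λ) = σ_k(λ)/σ_{k-1}(λ) − ∑_{l=0}^{k-2} β_l σ_l(λ)/σ_{k-1}(λ)`. -/
noncomputable def krylovF (n k : ℕ) (β : ℕ → ℝ) (lam : Fin n → ℝ) : ℝ :=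
  esymm n k lam / esymm n (k - 1) lam
    - ∑ l ∈ Finset.range (k - 1), β l * (esymm n l lam / esymm n (k - 1) lam)







lemma esymm_zero' (T : Multiset ℝ) : T.esymm 0 = 1 := by
  simp [Multiset.esymm]

lemma esymm_of_card_lt {T : Multiset ℝ} {r : ℕ} (h : Multiset.card T < r) : T.esymm r = 0 := by
  simp [Multiset.esymm, Multiset.powersetCard_eq_empty _ h]

lemma esymm_cons' (a : ℝ) (T : Multiset ℝ) (r : ℕ) :
    (a ::ₘ T).esymm (r + 1) = T.esymm (r + 1) + a * T.esymm r := by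
  rw [Multiset.esymm, Multiset.powersetCard_cons, Multiset.map_add, Multiset.sum_add,
    Multiset.map_map]
  congr 1
  rw [Multiset.esymm, ← Multiset.sum_map_mul_left]
  congr 1
  apply Multiset.map_congr rfl
  intro x _
  simp [Multiset.prod_cons]

/-- Top-index Newton inequality for a multiset of reals. -/
lemma top_newton (m : ℕ) : ∀ T : Multiset ℝ, Multiset.card T = m + 2 →
    ((m : ℝ) + 1) * T.esymm (m + 1) ^ 2 ≥
      2 * ((m : ℝ) + 2) * T.esymm m * T.esymm (m + 2) := by
  induction m with
  | zero =>
    intro T hT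
    have hne : T ≠ 0 := by intro h; rw [h] at hT; simp at hT
    obtain ⟨a, ha⟩ := Multiset.exists_mem_of_ne_zero hne
    obtain ⟨T1, rfl⟩ := Multiset.exists_cons_of_mem ha
    have hne1 : T1 ≠ 0 := by intro h; rw [h] at hT; simp at hT
    obtain ⟨b, hb⟩ := Multiset.exists_mem_of_ne_zero hne1
    obtain ⟨T2, rfl⟩ := Multiset.exists_cons_of_mem hb
    have h0 : Multiset.card T2 = 0 := by simpa using hT
    rw [Multiset.card_eq_zero] at h0
    subst h0
    simp only [esymm_cons', esymm_zero']
    have h0 : (0 : Multiset ℝ).esymm 1 = 0 := esymm_of_card_lt (by simp)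
    have h2 : (0 : Multiset ℝ).esymm 2 = 0 := esymm_of_card_lt (by simp)
    have hb1 : ((0 : Multiset ℝ)).esymm 0 = 1 := esymm_zero' _
    rw [h0, h2]
    ring_nf
    nlinarith [sq_nonneg (a - b)]
  | succ m ih =>
    intro T hT
    have hne : T ≠ 0 := by intro h; rw [h] at hT; simp at hT
    obtain ⟨a, ha⟩ := Multiset.exists_mem_of_ne_zero hne
    obtain ⟨T', rfl⟩ := Multiset.exists_cons_of_mem ha
    have hc : Multiset.card T' = m + 2 := by simpa using hT
    have IH := ih T' hc
    have htop : T'.esymm (m + 3) = 0 := esymm_of_card_lt (by omega)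
    have e1 : (a ::ₘ T').esymm (m + 2) = T'.esymm (m + 2) + a * T'.esymm (m + 1) :=
      esymm_cons' a T' (m + 1)
    have e2 : (a ::ₘ T').esymm (m + 1) = T'.esymm (m + 1) + a * T'.esymm m :=
      esymm_cons' a T' m
    have e3 : (a ::ₘ T').esymm (m + 3) = a * T'.esymm (m + 2) := by
      rw [esymm_cons' a T' (m + 2), htop]; ring
    rw [e1, e2, e3]
    push_cast
    set x := T'.esymm m
    set y := T'.esymm (m + 1)
    set z := T'.esymm (m + 2)
    have hm : (0:ℝ) < (m:ℝ) + 2 := by positivity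
    -- goal: (m+2)*(z + a*y)^2 ≥ 2*(m+3)*(y + a*x)*(a*z)
    nlinarith [mul_nonneg (mul_nonneg (sq_nonneg a) hm.le) (sub_nonneg.2 IH),
      sq_nonneg (((m:ℝ) + 2) * z - a * y), hm, mul_pos hm hm]
open Polynomial in
lemma deriv_step {p : ℝ[X]} (hs : Multiset.card p.roots = p.natDegree)
    (h1 : 1 ≤ p.natDegree) :
    Multiset.card (derivative p).roots = (derivative p).natDegree ∧
      (derivative p).natDegree = p.natDegree - 1 := by
  have h2 := p.card_roots_le_derivative
  have h3 := (derivative p).card_roots'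
  have h4 := p.natDegree_derivative_le
  omega

open Polynomial in
lemma iter_step (d : ℕ) {p : ℝ[X]} (hs : Multiset.card p.roots = p.natDegree)
    (hd : d ≤ p.natDegree) :
    Multiset.card (derivative^[d] p).roots = (derivative^[d] p).natDegree ∧
      (derivative^[d] p).natDegree = p.natDegree - d := by
  induction d with
  | zero => simpa using hs
  | succ d ih =>
    obtain ⟨ih1, ih2⟩ := ih (by omega)
    rw [Function.iterate_succ_apply']
    have := deriv_step ih1 (by omega)
    exact ⟨this.1, by omega⟩

set_option maxHeartbeats 1000000 in
open Polynomial in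
lemma newton (n j : ℕ) (lam : Fin n → ℝ) (hj : 1 ≤ j) (hjn : j + 1 ≤ n) :
    ((j : ℝ) + 1) * ((n : ℝ) - j + 1) * (esymm n (j-1) lam * esymm n (j+1) lam) ≤
    (j : ℝ) * ((n : ℝ) - j) * esymm n j lam ^ 2 := by
  classical
  set P : ℝ[X] := ∏ i : Fin n, (X + C (lam i)) with hP
  have hPdeg : P.natDegree = n := by
    rw [hP, natDegree_prod_of_monic _ _ (fun i _ => monic_X_add_C _)]
    simp [natDegree_X_add_C]
  have hPsplits : P.Splits :=
    Splits.prod (fun i _ => Splits.of_natDegree_le_one (by simp [natDegree_X_add_C]))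
  have hProots : Multiset.card P.roots = P.natDegree :=
    (splits_iff_card_roots).mp hPsplits
  have hPcoeff : ∀ m, m ≤ n → P.coeff m = esymm n (n - m) lam := by
    intro m hm
    rw [hP, Finset.prod_X_add_C_coeff _ _ (by simpa using hm)]
    simp [esymm]
  obtain ⟨d, hd⟩ : ∃ d, d = n - (j+1) := ⟨_, rfl⟩
  set Q : ℝ[X] := derivative^[d] P with hQ
  obtain ⟨hQroots, hQdeg⟩ := iter_step d hProots (by omega)
  rw [hPdeg] at hQdeg
  have hQdeg' : Q.natDegree = j + 1 := by rw [hQ]; omega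
  have hQsplits : Q.Splits := splits_iff_card_roots.mpr hQroots
  set T : Multiset ℝ := Q.roots with hT
  have hTcard : Multiset.card T = j + 1 := by rw [hT, hQroots, hQdeg']
  set L : ℝ := Q.leadingCoeff with hL
  have hprod : Q = C L * (T.map fun a => X - C a).prod := hQsplits.eq_prod_roots
  -- coefficient of Q, way (ii)
  have hcoeff2 : ∀ r, r ≤ j + 1 →
      Q.coeff r = L * ((-1) ^ (j + 1 - r) * T.esymm (j + 1 - r)) := by
    intro r hr
    conv_lhs => rw [hprod]
    rw [coeff_C_mul, Multiset.prod_X_sub_C_coeff _ (by omega : r ≤ Multiset.card T), hTcard]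
  -- coefficient of Q, way (i)
  have hcoeff1 : ∀ r, r ≤ j + 1 →
      Q.coeff r = ((r + d).descFactorial d : ℝ) * esymm n (j + 1 - r) lam := by
    intro r hr
    rw [hQ, coeff_iterate_derivative, hPcoeff (r + d) (by omega), nsmul_eq_mul]
    congr 2
    omega
  have key : ∀ r, r ≤ j + 1 →
      ((r + d).descFactorial d : ℝ) * esymm n (j + 1 - r) lam
        = L * ((-1) ^ (j + 1 - r) * T.esymm (j + 1 - r)) := by
    intro r hr
    rw [← hcoeff1 r hr, hcoeff2 r hr]
  have E1 := key 1 (by omega)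
  have E0 := key 0 (by omega)
  have E2 := key 2 (by omega)
  simp only [show j + 1 - 1 = j from rfl, Nat.sub_zero, show j + 1 - 2 = j - 1 by omega] at E1 E0 E2
  -- top Newton for T
  have hTcard' : Multiset.card T = (j - 1) + 2 := by omega
  have TN := top_newton (j - 1) T hTcard'
  rw [show j - 1 + 1 = j by omega, show j - 1 + 2 = j + 1 by omega] at TN
  have hjr : ((j - 1 : ℕ) : ℝ) = (j : ℝ) - 1 := by
    have := Nat.cast_sub hj (R := ℝ); simpa using this
  rw [hjr] at TN
  -- multiply top Newton by L^2 and substitute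
  have sqj : ((-1:ℝ)^j)^2 = 1 := by
    rw [← pow_mul, mul_comm, pow_mul]; norm_num
  have prj : ((-1:ℝ))^(j-1) * ((-1:ℝ))^(j+1) = 1 := by
    rw [← pow_add, show j - 1 + (j + 1) = 2 * j by omega, pow_mul]; norm_num
  set e1 := T.esymm (j-1)
  set e2 := T.esymm j
  set e3 := T.esymm (j+1)
  have TN2 : (j : ℝ) * (((1 + d).descFactorial d : ℝ) * esymm n j lam) ^ 2 ≥
      2 * ((j : ℝ) + 1) * (((2 + d).descFactorial d : ℝ) * esymm n (j - 1) lam)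
        * (((0 + d).descFactorial d : ℝ) * esymm n (j + 1) lam) := by
    rw [E1, E0, E2]
    have lhs_eq : (L * ((-1:ℝ)^j * e2))^2 = L^2 * e2^2 := by
      have h : (L * ((-1:ℝ)^j * e2))^2 = L^2 * ((-1:ℝ)^j)^2 * e2^2 := by ring
      rw [h, sqj]; ring
    have rhs_eq : (L * ((-1:ℝ)^(j-1) * e1)) * (L * ((-1:ℝ)^(j+1) * e3))
        = L^2 * (e1 * e3) := by
      have h : (L * ((-1:ℝ)^(j-1) * e1)) * (L * ((-1:ℝ)^(j+1) * e3))
          = L^2 * (((-1:ℝ))^(j-1) * ((-1:ℝ))^(j+1)) * (e1 * e3) := by ring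
      rw [h, prj]; ring
    nlinarith [mul_nonneg (sq_nonneg L) (sub_nonneg.2 TN), lhs_eq, rhs_eq]
  -- constants
  have hc0 : (0 + d).descFactorial d = d.factorial := by
    rw [Nat.zero_add, Nat.descFactorial_self]
  have hc1 : (1 + d).descFactorial d = (d + 1).factorial := by
    have h := Nat.descFactorial_succ (d + 1) d
    rw [Nat.descFactorial_self] at h
    rw [Nat.add_comm 1 d]
    simpa using h.symm
  have hc2 : 2 * ((2 + d).descFactorial d) = (d + 2).factorial := by
    have h1 := Nat.descFactorial_succ (d + 2) (d + 1)
    have h2 := Nat.descFactorial_succ (d + 2) d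
    rw [Nat.descFactorial_self] at h1
    rw [show d + 1 + 1 = d + 2 from rfl] at h1
    rw [show d + 2 - (d + 1) = 1 by omega] at h1
    rw [show d + 2 - d = 2 by omega] at h2
    rw [show 2 + d = d + 2 by omega]
    omega
  rw [hc0, hc1] at TN2
  set a := esymm n (j-1) lam
  set b := esymm n j lam
  set c := esymm n (j+1) lam
  have hf1 : (((d+1).factorial : ℕ) : ℝ) = ((d:ℝ) + 1) * (d.factorial : ℝ) := by
    rw [Nat.factorial_succ]; push_cast; ring
  have h2' : 2 * ((((2 + d).descFactorial d : ℕ)) : ℝ)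
      = ((d:ℝ) + 2) * (((d+1).factorial : ℕ) : ℝ) := by
    have : ((2 * ((2 + d).descFactorial d) : ℕ) : ℝ) = (((d+2).factorial : ℕ) : ℝ) := by
      rw [hc2]
    push_cast at this
    rw [Nat.factorial_succ (d+1)] at this
    push_cast at this
    linarith [this]
  have eY : 2 * ((j:ℝ)+1) * ((((2 + d).descFactorial d : ℕ):ℝ) * a) * ((d.factorial : ℝ) * c)
      = ((j:ℝ)+1) * ((d:ℝ)+2) * (a * c) * ((d.factorial:ℝ) * (((d+1).factorial : ℕ):ℝ)) := by
    linear_combination ((j:ℝ)+1) * a * c * (d.factorial:ℝ) * h2'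
  have eX : (j:ℝ) * ((((d+1).factorial : ℕ):ℝ) * b)^2
      = (j:ℝ) * ((d:ℝ)+1) * b^2 * ((d.factorial:ℝ) * (((d+1).factorial : ℕ):ℝ)) := by
    linear_combination (j:ℝ) * b^2 * (((d+1).factorial : ℕ):ℝ) * hf1
  rw [eY, eX] at TN2
  have hF : (0:ℝ) < (d.factorial : ℝ) * (((d+1).factorial : ℕ):ℝ) := by positivity
  have main : ((j:ℝ)+1) * ((d:ℝ)+2) * (a * c) ≤ (j:ℝ) * ((d:ℝ)+1) * b^2 :=
    le_of_mul_le_mul_right TN2 hF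
  have hd1 : (n:ℝ) - (j:ℝ) = (d:ℝ) + 1 := by
    have hnj : n - j = d + 1 := by omega
    have h2 : ((n - j : ℕ) : ℝ) = (d:ℝ) + 1 := by rw [hnj]; push_cast; ring
    rw [Nat.cast_sub (by omega : j ≤ n)] at h2
    exact h2
  rw [hd1]
  nlinarith [main]

lemma esymm_zero_eq_one (n : ℕ) (lam : Fin n → ℝ) : esymm n 0 lam = 1 := by
  simp [esymm]



lemma hasFDerivAt_esymm (n m : ℕ) (lam : Fin n → ℝ) :
    HasFDerivAt (esymm n m)
      (∑ s ∈ Finset.powersetCard m (Finset.univ : Finset (Fin n)),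
        ∑ i ∈ s, (∏ j ∈ s.erase i, lam j) •
          (ContinuousLinearMap.proj i : (Fin n → ℝ) →L[ℝ] ℝ)) lam := by
  have h : esymm n m = fun x : Fin n → ℝ =>
      ∑ s ∈ Finset.powersetCard m (Finset.univ : Finset (Fin n)), ∏ i ∈ s, x i := rfl
  rw [h]
  apply HasFDerivAt.fun_sum
  intro s _
  exact hasFDerivAt_finset_prod

lemma comb_eval (n m : ℕ) (hm : 1 ≤ m) (lam : Fin n → ℝ) :
    ∑ s ∈ Finset.powersetCard m (Finset.univ : Finset (Fin n)),
      ∑ i ∈ s, ∏ j ∈ s.erase i, lam j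
    = ((n - (m - 1) : ℕ) : ℝ) * esymm n (m - 1) lam := by
  classical
  rw [Finset.sum_sigma']
  rw [show ((n - (m - 1) : ℕ) : ℝ) * esymm n (m - 1) lam
      = ∑ u ∈ Finset.powersetCard (m - 1) (Finset.univ : Finset (Fin n)),
          ∑ _i ∈ uᶜ, ∏ j ∈ u, lam j by
    rw [esymm, Finset.mul_sum]
    apply Finset.sum_congr rfl
    intro u hu
    rw [Finset.sum_const, nsmul_eq_mul]
    congr 1
    rw [Finset.card_compl, (Finset.mem_powersetCard.mp hu).2]
    simp]
  rw [Finset.sum_sigma']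
  apply Finset.sum_nbij' (i := fun p => (⟨p.1.erase p.2, p.2⟩ :
      (_ : Finset (Fin n)) × Fin n))
    (j := fun p => (⟨insert p.2 p.1, p.2⟩ : (_ : Finset (Fin n)) × Fin n))
  · intro p hp
    rw [Finset.mem_sigma] at hp ⊢
    obtain ⟨h1, h2⟩ := hp
    rw [Finset.mem_powersetCard] at h1 ⊢
    refine ⟨⟨by simp, ?_⟩, ?_⟩
    · rw [Finset.card_erase_of_mem h2, h1.2]
    · simp [Finset.mem_compl]
  · intro p hp
    rw [Finset.mem_sigma] at hp ⊢
    obtain ⟨h1, h2⟩ := hp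
    rw [Finset.mem_powersetCard] at h1 ⊢
    rw [Finset.mem_compl] at h2
    refine ⟨⟨by simp, ?_⟩, by simp⟩
    · rw [Finset.card_insert_of_notMem h2, h1.2]
      omega
  · intro p hp
    rw [Finset.mem_sigma] at hp
    simp [Finset.insert_erase hp.2]
  · intro p hp
    rw [Finset.mem_sigma] at hp
    have h2 : p.2 ∉ p.1 := by simpa [Finset.mem_compl] using hp.2
    simp [Finset.erase_insert h2]
  · intro p hp
    rfl

lemma chain_lemma (n k : ℕ) (hk : 2 ≤ k) (hkn : k ≤ n) (lam : Fin n → ℝ)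
    (hpos : ∀ m, 1 ≤ m → m ≤ k - 1 → 0 < esymm n m lam) :
    ∀ l, 1 ≤ l → l ≤ k - 2 →
      ((n:ℝ) - l + 1) * esymm n (l-1) lam * esymm n (k-1) lam ≤
      ((n:ℝ) - k + 2) * esymm n l lam * esymm n (k-2) lam := by
  intro l hl1 hl2
  have hSpos : ∀ m, m ≤ k - 1 → 0 < esymm n m lam := by
    intro m hm
    rcases Nat.eq_zero_or_pos m with rfl | hm1
    · rw [esymm_zero_eq_one]; norm_num
    · exact hpos m hm1 hm
  set v : ℕ → ℝ := fun j => ((n:ℝ) - j + 1) * esymm n (j-1) lam / ((j:ℝ) * esymm n j lam)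
    with hv
  have mono : ∀ j, 1 ≤ j → j + 1 ≤ k - 1 → v j ≤ v (j+1) := by
    intro j hj1 hj2
    have hjn : j + 1 ≤ n := by omega
    have NN := newton n j lam hj1 hjn
    have p1 : (0:ℝ) < (j:ℝ) * esymm n j lam := by
      have := hSpos j (by omega)
      have hj0 : (0:ℝ) < (j:ℝ) := by exact_mod_cast hj1
      positivity
    have p2 : (0:ℝ) < ((j:ℝ)+1) * esymm n (j+1) lam := by
      have := hSpos (j+1) (by omega)
      positivity
    rw [hv]
    simp only []
    rw [Nat.add_sub_cancel]
    rw [Nat.cast_add, Nat.cast_one]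
    rw [div_le_div_iff₀ p1 p2]
    nlinarith [NN]
  have ladder : ∀ m : ℕ, l + m ≤ k - 1 → v l ≤ v (l + m) := by
    intro m
    induction m with
    | zero => intro _; simp
    | succ m ih =>
      intro hm
      have h1 : v l ≤ v (l + m) := ih (by omega)
      have h2 : v (l + m) ≤ v (l + m + 1) := mono (l + m) (by omega) (by omega)
      calc v l ≤ v (l + m) := h1
        _ ≤ v (l + m + 1) := h2
  have hfin : v l ≤ v (k - 1) := by
    have := ladder ((k-1) - l) (by omega)
    rwa [show l + ((k-1) - l) = k - 1 by omega] at this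
  rw [hv] at hfin
  simp only [] at hfin
  rw [show (k-1) - 1 = k - 2 by omega] at hfin
  have hck : ((k-1 : ℕ):ℝ) = (k:ℝ) - 1 := by
    rw [Nat.cast_sub (by omega)]; simp
  rw [hck] at hfin
  have pl : (0:ℝ) < (l:ℝ) * esymm n l lam := by
    have := hSpos l (by omega)
    have hl0 : (0:ℝ) < (l:ℝ) := by exact_mod_cast hl1
    positivity
  have pk : (0:ℝ) < ((k:ℝ) - 1) * esymm n (k-1) lam := by
    have := hSpos (k-1) le_rfl
    have : (0:ℝ) < (k:ℝ) - 1 := by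
      have : (2:ℝ) ≤ (k:ℝ) := by exact_mod_cast hk
      linarith
    positivity
  rw [div_le_div_iff₀ pl pk] at hfin
  -- hfin : (n - l + 1) * S(l-1) * ((k-1) * S(k-1)) ≤ (n - (k-1) + 1) * S(k-2) * (l * S l)
  have hnk : (n:ℝ) - ((k:ℝ) - 1) + 1 = (n:ℝ) - k + 2 := by ring
  rw [hnk] at hfin
  have hY : (0:ℝ) ≤ ((n:ℝ) - k + 2) * esymm n l lam * esymm n (k-2) lam := by
    have h1 := hSpos l (by omega)
    have h2 := hSpos (k-2) (by omega)
    have h3 : (0:ℝ) ≤ (n:ℝ) - k + 2 := by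
      have : (k:ℝ) ≤ (n:ℝ) := by exact_mod_cast hkn
      linarith
    positivity
  have hlk : (l:ℝ) ≤ (k:ℝ) - 1 := by
    have : (l:ℕ) ≤ k - 1 := by omega
    have h := (Nat.cast_le (α := ℝ)).mpr this
    rw [hck] at h
    exact h
  have hk1 : (0:ℝ) < (k:ℝ) - 1 := by
    have : (2:ℝ) ≤ (k:ℝ) := by exact_mod_cast hk
    linarith
  nlinarith [hfin, hY, hlk, hk1]
lemma final_scalar (n k : ℕ) (hn : 2 ≤ n) (hk : 2 ≤ k) (hkn : k ≤ n) (β : ℕ → ℝ)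
    (hβ : ∀ l ≤ k - 2, 0 ≤ β l) (lam : Fin n → ℝ)
    (hpos : ∀ m, 1 ≤ m → m ≤ k - 1 → 0 < esymm n m lam)
    (d : ℕ → ℝ) (hd0 : d 0 = 0)
    (hdm : ∀ m, 1 ≤ m → d m = ((n - (m - 1) : ℕ) : ℝ) * esymm n (m - 1) lam) :
    (esymm n k lam * (-((esymm n (k-1) lam)^2)⁻¹ * d (k-1)) + (esymm n (k-1) lam)⁻¹ * d k)
      - ∑ l ∈ Finset.range (k-1), β l *
          (esymm n l lam * (-((esymm n (k-1) lam)^2)⁻¹ * d (k-1)) + (esymm n (k-1) lam)⁻¹ * d l)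
    ≥ ((n : ℝ) - (k : ℝ) + 1) / (k : ℝ) := by
  have hs0 : (0:ℝ) < esymm n (k-1) lam := hpos (k-1) (by omega) le_rfl
  have hQ : (0:ℝ) < (esymm n (k-1) lam)^2 := by positivity
  have hk0 : (0:ℝ) < (k:ℝ) := by positivity
  have hkr : (2:ℝ) ≤ (k:ℝ) := by exact_mod_cast hk
  have hnr : (k:ℝ) ≤ (n:ℝ) := by exact_mod_cast hkn
  have hck : ((k-1 : ℕ):ℝ) = (k:ℝ) - 1 := by
    rw [Nat.cast_sub (by omega)]; simp
  -- values of d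
  have hdk : d k = ((n:ℝ) - k + 1) * esymm n (k-1) lam := by
    rw [hdm k (by omega), Nat.cast_sub (by omega : k - 1 ≤ n), hck]
    ring_nf
  have hdk1 : d (k-1) = ((n:ℝ) - k + 2) * esymm n (k-2) lam := by
    rw [hdm (k-1) (by omega), show (k-1) - 1 = k - 2 by omega,
      Nat.cast_sub (by omega : k - 2 ≤ n)]
    have : ((k-2 : ℕ):ℝ) = (k:ℝ) - 2 := by
      rw [Nat.cast_sub (by omega)]; simp
    rw [this]
    ring_nf
  -- piece A
  have NN := newton n (k-1) lam (by omega) (by omega : (k-1) + 1 ≤ n)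
  rw [show (k-1) + 1 = k by omega, show (k-1) - 1 = k - 2 by omega, hck] at NN
  have hA : esymm n k lam * (-((esymm n (k-1) lam)^2)⁻¹ * d (k-1))
      + (esymm n (k-1) lam)⁻¹ * d k ≥ ((n:ℝ) - k + 1) / k := by
    rw [hdk, hdk1]
    have step1 : esymm n k lam * (-((esymm n (k-1) lam)^2)⁻¹ * (((n:ℝ) - k + 2) * esymm n (k-2) lam))
        + (esymm n (k-1) lam)⁻¹ * (((n:ℝ) - k + 1) * esymm n (k-1) lam)
        = ((n:ℝ) - k + 1) - (((n:ℝ) - k + 2) * (esymm n k lam * esymm n (k-2) lam))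
            / (esymm n (k-1) lam)^2 := by
      field_simp
      ring
    rw [step1]
    have step2 : (((n:ℝ) - k + 2) * (esymm n k lam * esymm n (k-2) lam))
        / (esymm n (k-1) lam)^2 ≤ ((n:ℝ) - k + 1) * ((k:ℝ) - 1) / k := by
      rw [div_le_div_iff₀ hQ hk0]
      nlinarith [NN]
    have step3 : ((n:ℝ) - k + 1) - ((n:ℝ) - k + 1) * ((k:ℝ) - 1) / k = ((n:ℝ) - k + 1) / k := by
      field_simp
      ring
    linarith [step2, step3]
  -- piece B
  have hterm : ∀ l ∈ Finset.range (k-1), β l *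
      (esymm n l lam * (-((esymm n (k-1) lam)^2)⁻¹ * d (k-1)) + (esymm n (k-1) lam)⁻¹ * d l)
      ≤ 0 := by
    intro l hl
    have hl' : l ≤ k - 2 := by
      have := Finset.mem_range.mp hl; omega
    apply mul_nonpos_of_nonneg_of_nonpos (hβ l hl')
    have hsk2 : (0:ℝ) < esymm n (k-2) lam := by
      rcases Nat.eq_zero_or_pos (k-2) with h0 | hpos2
      · rw [h0, esymm_zero_eq_one]; norm_num
      · exact hpos (k-2) hpos2 (by omega)
    have hnk2 : (0:ℝ) ≤ (n:ℝ) - k + 2 := by linarith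
    rcases Nat.eq_zero_or_pos l with rfl | hl1
    · rw [hd0, hdk1]
      have h1 : (0:ℝ) < esymm n 0 lam := by rw [esymm_zero_eq_one]; norm_num
      have h2 : (0:ℝ) ≤ ((esymm n (k-1) lam)^2)⁻¹ := by positivity
      rw [mul_zero, add_zero]
      apply mul_nonpos_of_nonneg_of_nonpos h1.le
      rw [neg_mul]
      apply neg_nonpos_of_nonneg
      apply mul_nonneg h2
      positivity
    · have hdl : d l = ((n:ℝ) - l + 1) * esymm n (l-1) lam := by
        rw [hdm l hl1, Nat.cast_sub (by omega : l - 1 ≤ n)]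
        have : ((l-1 : ℕ):ℝ) = (l:ℝ) - 1 := by
          rw [Nat.cast_sub (by omega)]; simp
        rw [this]
        ring_nf
      rw [hdl, hdk1]
      have hchain := chain_lemma n k hk hkn lam hpos l hl1 hl'
      have heq : esymm n l lam * (-((esymm n (k-1) lam)^2)⁻¹
            * (((n:ℝ) - k + 2) * esymm n (k-2) lam))
          + (esymm n (k-1) lam)⁻¹ * (((n:ℝ) - l + 1) * esymm n (l-1) lam)
          = (((n:ℝ) - l + 1) * esymm n (l-1) lam * esymm n (k-1) lam
              - ((n:ℝ) - k + 2) * esymm n l lam * esymm n (k-2) lam)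
            / (esymm n (k-1) lam)^2 := by
        field_simp
        ring
      rw [heq]
      apply div_nonpos_of_nonpos_of_nonneg (by linarith) hQ.le
  have hsum := Finset.sum_nonpos hterm
  linarith [hA, hsum]

/-- Lemma 2.14: for nonnegative `β_0, …, β_{k-2}` and `λ ∈ Γ_{k-1}`,
`∑ᵢ fᵢ(λ) ≥ (n−k+1)/k`. -/
theorem krylovF_derivative_sum_lower_bound (n k : ℕ) (hn : 2 ≤ n) (hk : 2 ≤ k)
    (hkn : k ≤ n) (β : ℕ → ℝ) (hβ : ∀ l ≤ k - 2, 0 ≤ β l)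
    (lam : Fin n → ℝ) (hlam : lam ∈ GammaCone n (k - 1)) :
    ∑ i : Fin n, fderiv ℝ (krylovF n k β) lam (Pi.single i 1)
      ≥ ((n : ℝ) - (k : ℝ) + 1) / (k : ℝ) := by
  classical
  have hpos : ∀ m, 1 ≤ m → m ≤ k - 1 → 0 < esymm n m lam := fun m h1 h2 => hlam m h1 h2
  have hs0 : esymm n (k-1) lam ≠ 0 := ne_of_gt (hpos (k-1) (by omega) le_rfl)
  set D : ℕ → (Fin n → ℝ) →L[ℝ] ℝ := fun m =>
    ∑ s ∈ Finset.powersetCard m (Finset.univ : Finset (Fin n)),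
      ∑ i ∈ s, (∏ j ∈ s.erase i, lam j) •
        (ContinuousLinearMap.proj i : (Fin n → ℝ) →L[ℝ] ℝ) with hD
  have hDm : ∀ m, HasFDerivAt (esymm n m) (D m) lam := fun m => hasFDerivAt_esymm n m lam
  have hInv : HasFDerivAt (fun y : Fin n → ℝ => (esymm n (k-1) y)⁻¹)
      (-((esymm n (k-1) lam)^2)⁻¹ • D (k-1)) lam := by
    have h1 : HasDerivAt (fun t : ℝ => t⁻¹) (-((esymm n (k-1) lam)^2)⁻¹) (esymm n (k-1) lam) :=
      hasDerivAt_inv hs0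
    exact h1.comp_hasFDerivAt lam (hDm (k-1))
  have hdiv : ∀ m, HasFDerivAt (fun y => esymm n m y / esymm n (k-1) y)
      (esymm n m lam • (-((esymm n (k-1) lam)^2)⁻¹ • D (k-1)) + (esymm n (k-1) lam)⁻¹ • D m)
      lam := by
    intro m
    have h2 := (hDm m).fun_mul hInv
    simpa [div_eq_mul_inv] using h2
  set L : (Fin n → ℝ) →L[ℝ] ℝ :=
    (esymm n k lam • (-((esymm n (k-1) lam)^2)⁻¹ • D (k-1)) + (esymm n (k-1) lam)⁻¹ • D k)
      - ∑ l ∈ Finset.range (k-1), β l •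
        (esymm n l lam • (-((esymm n (k-1) lam)^2)⁻¹ • D (k-1)) + (esymm n (k-1) lam)⁻¹ • D l)
    with hL
  have hkry : HasFDerivAt (krylovF n k β) L lam := by
    have h3 : krylovF n k β = fun x => (esymm n k x / esymm n (k-1) x)
        - ∑ l ∈ Finset.range (k-1), β l * (esymm n l x / esymm n (k-1) x) := rfl
    rw [h3, hL]
    exact (hdiv k).sub (HasFDerivAt.fun_sum fun l _ => ((hdiv l).const_mul (β l)))
  rw [hkry.fderiv]
  have hsum : ∑ i : Fin n, L (Pi.single i 1) = L (fun _ => 1) := by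
    rw [← map_sum]
    congr 1
    exact Finset.univ_sum_single (fun _ => (1:ℝ))
  rw [hsum]
  -- evaluate D m at the all-ones vector
  have hDval : ∀ m, 1 ≤ m → D m (fun _ => 1) = ((n - (m - 1) : ℕ) : ℝ) * esymm n (m-1) lam := by
    intro m hm
    rw [hD]
    simp only [ContinuousLinearMap.sum_apply, ContinuousLinearMap.smul_apply,
      ContinuousLinearMap.proj_apply, smul_eq_mul, mul_one]
    exact comb_eval n m hm lam
  have hD0 : D 0 (fun _ => 1) = 0 := by
    rw [hD]
    simp [Finset.powersetCard_zero]
  have hLval : L (fun _ => 1) =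
      (esymm n k lam * (-((esymm n (k-1) lam)^2)⁻¹ * (D (k-1) (fun _ => 1)))
        + (esymm n (k-1) lam)⁻¹ * (D k (fun _ => 1)))
      - ∑ l ∈ Finset.range (k-1), β l *
          (esymm n l lam * (-((esymm n (k-1) lam)^2)⁻¹ * (D (k-1) (fun _ => 1)))
            + (esymm n (k-1) lam)⁻¹ * (D l (fun _ => 1))) := by
    rw [hL]
    simp [ContinuousLinearMap.sub_apply, ContinuousLinearMap.add_apply,
      ContinuousLinearMap.smul_apply, ContinuousLinearMap.sum_apply, smul_eq_mul, mul_assoc]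
    exact Finset.sum_congr rfl fun x _ => by ring
  rw [hLval]
  exact final_scalar n k hn hk hkn β hβ lam hpos (fun m => D m (fun _ => 1)) hD0
    (fun m hm => hDval m hm)
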